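/- The super-centre of the fibrewise deformed algebra (Sym(V*) ⊗ Sym(V) ⊗ Λ(V*)[[λ]], ∘_κ) consists exactly of the elements with symmetric V*-degree 0 and symmetric V-degree 0, i.e. a super-commutes with all elements (ad_κ(a) = 0) iff a ∈ Λ(V*)[[λ]]. -/

import Mathlib

/- Setup (from Statement 6): the fibrewise κ-ordered product
`a ∘_κ b = μ ∘ exp(-(1-κ) iλ Σ_α i_s(e^α)⊗i_s(e_α) + κ iλ Σ_α i_s(e_α)⊗i_s(e^α))(a ⊗ b)`
on `Sym(V*) ⊗ Sym(V)` over `ℂ[[λ]]` is associative for every `κ ∈ ℝ`.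
Model: `Sym(V*) ⊗ Sym(V)` is the polynomial algebra in variables `x_α = inl α`
(for `Sym V*`) and `y_α = inr α` (for `Sym V`) with coefficients in
`ℂ[[λ]]`; `i_s(e_α) = ∂/∂x_α` and `i_s(e^α) = ∂/∂y_α`. -/

namespace Stmt6

noncomputable section

abbrev Rg : Type := PowerSeries ℂ

/-- `iλ` as a formal power series. -/
def il : Rg := PowerSeries.C Complex.I * PowerSeries.X

/-- `Sym(V*) ⊗ Sym(V)` for `V = ℂⁿ`. -/
abbrev A (n : ℕ) := MvPolynomial (Fin n ⊕ Fin n) Rg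

/-- Two commuting copies, modelling `(Sym(V*) ⊗ Sym(V)) ⊗ (Sym(V*) ⊗ Sym(V))`. -/
abbrev T (n : ℕ) := MvPolynomial ((Fin n ⊕ Fin n) ⊕ (Fin n ⊕ Fin n)) Rg

/-- The exponent `-(1-κ) iλ Σ_α i_s(e^α)⊗i_s(e_α) + κ iλ Σ_α i_s(e_α)⊗i_s(e^α)`. -/
def Nop (n : ℕ) (κ : ℝ) (p : T n) : T n :=
  ∑ α : Fin n,
    (((-(1 - (κ : ℂ))) • il) •
        MvPolynomial.pderiv (Sum.inl (Sum.inr α))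
          (MvPolynomial.pderiv (Sum.inr (Sum.inl α)) p) +
      (((κ : ℂ)) • il) •
        MvPolynomial.pderiv (Sum.inl (Sum.inl α))
          (MvPolynomial.pderiv (Sum.inr (Sum.inr α)) p))

/-- The exponential `exp(Nop)`; the series terminates on each polynomial since
each application of `Nop` lowers the total degree by 2. -/
def expN (n : ℕ) (κ : ℝ) (p : T n) : T n :=
  ∑ k ∈ Finset.range (p.totalDegree + 1),
    ((k.factorial : ℂ)⁻¹) • (Nop n κ)^[k] p

/-- `a ⊗ b` realized in the two commuting copies. -/
def joinLR (n : ℕ) (a b : A n) : T n :=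
  (MvPolynomial.rename Sum.inl a) * (MvPolynomial.rename Sum.inr b)

/-- The multiplication map `μ`, identifying the two copies. -/
def merge (n : ℕ) : T n →ₐ[Rg] A n := MvPolynomial.rename (Sum.elim id id)

/-- The fibrewise κ-ordered product `∘_κ`. -/
def starK (n : ℕ) (κ : ℝ) (a b : A n) : A n := merge n (expN n κ (joinLR n a b))

/-- `Sym(V*) ⊗ Sym(V) ⊗ Λ(V*)[[λ]]`: the exterior factor is realized on the
basis `e_S`, `S ⊆ Fin n`. -/
abbrev FA (n : ℕ) := Finset (Fin n) →₀ A n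

/-- Koszul sign of `e_S ∧ e_T` for disjoint `S`, `T`. -/
def wsign (n : ℕ) (S T : Finset (Fin n)) : ℂ :=
  (-1 : ℂ) ^ ((S ×ˢ T).filter fun p => p.2 < p.1).card

/-- The κ-ordered fibrewise super-commutator `ad_κ(x) y = x ∘_κ y - (-1)^{|x||y|} y ∘_κ x`,
computed on the Λ-graded components. -/
def adK (n : ℕ) (κ : ℝ) (x y : FA n) : FA n :=
  x.sum fun S p => y.sum fun T q =>
    (if Disjoint S T then
        wsign n S T • Finsupp.single (S ∪ T) (starK n κ p q) else 0)
    - ((-1 : ℂ) ^ (S.card * T.card)) •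
      (if Disjoint T S then
        wsign n T S • Finsupp.single (T ∪ S) (starK n κ q p) else 0)


section Aux

open MvPolynomial Finsupp

lemma il_ne_zero : il ≠ 0 := by
  intro h
  have := congrArg (PowerSeries.coeff 1) h
  simp [il] at this

lemma pderiv_inr_rename_inl {n : ℕ} (j : Fin n ⊕ Fin n) (q : A n) :
    pderiv (Sum.inr j) (rename Sum.inl q : T n) = 0 := by
  apply pderiv_eq_zero_of_notMem_vars
  intro h
  obtain ⟨i, _, hi⟩ := mem_vars_rename _ _ h
  exact Sum.inl_ne_inr hi

lemma pderiv_inl_rename_inr {n : ℕ} (j : Fin n ⊕ Fin n) (q : A n) :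
    pderiv (Sum.inl j) (rename Sum.inr q : T n) = 0 := by
  apply pderiv_eq_zero_of_notMem_vars
  intro h
  obtain ⟨i, _, hi⟩ := mem_vars_rename _ _ h
  exact Sum.inr_ne_inl hi

lemma Nop_zero {n : ℕ} {κ : ℝ} : Nop n κ 0 = 0 := by
  simp [Nop]

lemma Nop_smul {n : ℕ} {κ : ℝ} (r : Rg) (p : T n) : Nop n κ (r • p) = r • Nop n κ p := by
  unfold Nop
  rw [Finset.smul_sum]
  refine Finset.sum_congr rfl fun α _ => ?_
  simp only [Derivation.map_smul]
  rw [smul_add, smul_comm r, smul_comm r]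

lemma Nop_rename_inl {n : ℕ} {κ : ℝ} (q : A n) : Nop n κ (rename Sum.inl q) = 0 := by
  simp [Nop, pderiv_inr_rename_inl]

lemma Nop_rename_inr {n : ℕ} {κ : ℝ} (q : A n) : Nop n κ (rename Sum.inr q) = 0 := by
  simp [Nop, pderiv_rename Sum.inr_injective, pderiv_inl_rename_inr]

lemma exists_C_of_td {n : ℕ} (p : T n) (h : p.totalDegree = 0) :
    ∃ r : Rg, p = MvPolynomial.C r := by
  refine ⟨coeff 0 p, MvPolynomial.ext _ _ fun m => ?_⟩
  rw [coeff_C]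
  split_ifs with hm
  · rw [hm]
  · exact MvPolynomial.notMem_support_iff.mp
      (fun hmem => hm ((Finsupp.ext fun x => (totalDegree_eq_zero_iff _ p).1 h m hmem x).symm))

lemma expN_eq {n : ℕ} {κ : ℝ} (p : T n) (h2 : Nop n κ (Nop n κ p) = 0) :
    expN n κ p = p + Nop n κ p := by
  have hz : ∀ k, 2 ≤ k → (Nop n κ)^[k] p = 0 := by
    intro k hk
    obtain ⟨m, rfl⟩ : ∃ m, k = m + 2 := ⟨k - 2, by omega⟩
    rw [Function.iterate_add_apply]
    have h22 : (Nop n κ)^[2] p = 0 := by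
      simp only [Function.iterate_succ_apply', Function.iterate_zero_apply]
      exact h2
    rw [h22, Function.iterate_fixed Nop_zero]
  unfold expN
  rcases Nat.eq_zero_or_pos p.totalDegree with hd | hd
  · obtain ⟨r, rfl⟩ := exists_C_of_td p hd
    have hN : Nop n κ (C r : T n) = 0 := by
      simp [Nop, pderiv_C]
    rw [hd, hN, add_zero, Finset.sum_range_one]
    simp
  · rw [← Finset.sum_subset
      (Finset.range_subset_range.mpr (by omega) : Finset.range 2 ⊆ Finset.range (p.totalDegree + 1))
      (fun k _ hk2 => by
        rw [hz k (by simp at hk2; omega), smul_zero])]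
    rw [Finset.sum_range_succ, Finset.sum_range_one]
    simp

lemma expN_zero {n : ℕ} {κ : ℝ} : expN n κ (0 : T n) = 0 := by
  unfold expN
  refine Finset.sum_eq_zero fun k _ => ?_
  rw [Function.iterate_fixed Nop_zero k, smul_zero]

lemma merge_rename_inl {n : ℕ} (q : A n) : merge n (rename Sum.inl q) = q := by
  show rename (Sum.elim id id) (rename Sum.inl q) = q
  rw [rename_rename]
  have h : (Sum.elim id id ∘ Sum.inl : (Fin n ⊕ Fin n) → (Fin n ⊕ Fin n)) = id :=
    funext fun x => rfl
  rw [h, rename_id, AlgHom.id_apply]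

lemma merge_rename_inr {n : ℕ} (q : A n) : merge n (rename Sum.inr q) = q := by
  show rename (Sum.elim id id) (rename Sum.inr q) = q
  rw [rename_rename]
  have h : (Sum.elim id id ∘ Sum.inr : (Fin n ⊕ Fin n) → (Fin n ⊕ Fin n)) = id :=
    funext fun x => rfl
  rw [h, rename_id, AlgHom.id_apply]

lemma merge_joinLR {n : ℕ} (a b : A n) : merge n (joinLR n a b) = a * b := by
  unfold joinLR
  rw [map_mul, merge_rename_inl, merge_rename_inr]

lemma starK_zero_right {n : ℕ} {κ : ℝ} (p : A n) : starK n κ p 0 = 0 := by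
  unfold starK joinLR
  rw [map_zero, mul_zero, expN_zero, map_zero]

lemma starK_zero_left {n : ℕ} {κ : ℝ} (p : A n) : starK n κ 0 p = 0 := by
  unfold starK joinLR
  rw [map_zero, zero_mul, expN_zero, map_zero]

instance : CharZero Rg :=
  ⟨fun a b h => Nat.cast_injective (R := ℂ) (by
    have := congrArg (PowerSeries.constantCoeff) h
    simpa using this)⟩

lemma coeff_pderiv {σ : Type*} (i : σ) (m : σ →₀ ℕ) (p : MvPolynomial σ Rg) :
    coeff m (pderiv i p) = ((m i + 1 : ℕ) : Rg) * coeff (m + Finsupp.single i 1) p := by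
  classical
  induction p using MvPolynomial.induction_on' with
  | add p q hp hq => simp [hp, hq, mul_add]
  | monomial s a =>
    rw [pderiv_monomial, coeff_monomial, coeff_monomial]
    by_cases hs : s = m + Finsupp.single i 1
    · subst hs
      rw [if_pos (add_tsub_cancel_right m (Finsupp.single i 1)), if_pos rfl]
      simp [mul_comm]
    · rw [if_neg hs]
      by_cases hm : s - Finsupp.single i 1 = m
      · rw [if_pos hm]
        have hcoord : ∀ j, s j - (Finsupp.single i 1) j = m j := fun j => by
          rw [← Finsupp.tsub_apply, hm]
        have hsi : s i = 0 := by
          by_contra hne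
          apply hs
          ext j
          have hj := hcoord j
          rcases eq_or_ne j i with rfl | hji
          · simp only [Finsupp.single_eq_same] at hj
            simp only [Finsupp.add_apply, Finsupp.single_eq_same]
            omega
          · simp only [Finsupp.single_eq_of_ne hji] at hj
            simp only [Finsupp.add_apply, Finsupp.single_eq_of_ne hji]
            omega
        rw [hsi]
        simp
      · rw [if_neg hm, mul_zero]

lemma eq_C_of_pderiv_eq_zero {σ : Type*} (p : MvPolynomial σ Rg)
    (h : ∀ i, pderiv i p = 0) : ∃ r : Rg, p = C r := by
  classical
  refine ⟨coeff 0 p, MvPolynomial.ext _ _ fun m => ?_⟩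
  rw [coeff_C]
  split_ifs with hm
  · rw [hm]
  · by_cases hz : ∀ i, m i = 0
    · exact absurd ((Finsupp.ext hz).symm) hm
    · push_neg at hz
      obtain ⟨i, hi⟩ := hz
      have key := coeff_pderiv i (m - Finsupp.single i 1) p
      rw [h i, MvPolynomial.coeff_zero] at key
      have hle : Finsupp.single i 1 ≤ m := by
        rw [Finsupp.single_le_iff]
        omega
      rw [tsub_add_cancel_of_le hle] at key
      rcases mul_eq_zero.mp key.symm with hc | hc
      · exact absurd hc (Nat.cast_ne_zero.mpr (Nat.succ_ne_zero _))
      · exact hc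

lemma eq_zero_of_il_smul {n : ℕ} {D : A n} (h : il • D = 0) : D = 0 := by
  rw [MvPolynomial.smul_eq_C_mul] at h
  rcases mul_eq_zero.mp h with hc | hc
  · exact absurd (MvPolynomial.C_eq_zero.mp hc) il_ne_zero
  · exact hc

set_option synthInstance.maxHeartbeats 1000000 in
lemma Nop_joinLR_right_inr {n : ℕ} {κ : ℝ} (p : A n) (α : Fin n) :
    Nop n κ (joinLR n p (X (Sum.inr α))) =
      ((κ : ℂ) • il) • rename Sum.inl (pderiv (Sum.inl α) p) := by
  unfold Nop joinLR
  rw [rename_X]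
  have h : ∀ β : Fin n,
      ((-(1 - (κ : ℂ))) • il) • pderiv (Sum.inl (Sum.inr β))
          (pderiv (Sum.inr (Sum.inl β)) (rename Sum.inl p * X (Sum.inr (Sum.inr α)))) +
        ((κ : ℂ) • il) • pderiv (Sum.inl (Sum.inl β))
          (pderiv (Sum.inr (Sum.inr β)) (rename Sum.inl p * X (Sum.inr (Sum.inr α)))) =
      if β = α then ((κ : ℂ) • il) • rename Sum.inl (pderiv (Sum.inl α) p) else 0 := by
    intro β
    classical
    rcases eq_or_ne β α with rfl | hβ
    · simp [pderiv_mul, pderiv_inr_rename_inl, pderiv_X, Pi.single_apply,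
        pderiv_rename Sum.inl_injective]
    · simp [pderiv_mul, pderiv_inr_rename_inl, pderiv_X, Pi.single_apply, hβ]
  rw [Finset.sum_congr rfl fun β _ => h β, Finset.sum_ite_eq' Finset.univ α,
    if_pos (Finset.mem_univ α)]

set_option synthInstance.maxHeartbeats 1000000 in
lemma Nop_joinLR_left_inr {n : ℕ} {κ : ℝ} (p : A n) (α : Fin n) :
    Nop n κ (joinLR n (X (Sum.inr α)) p) =
      ((-(1 - (κ : ℂ))) • il) • rename Sum.inr (pderiv (Sum.inl α) p) := by
  unfold Nop joinLR
  rw [rename_X]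
  have h : ∀ β : Fin n,
      ((-(1 - (κ : ℂ))) • il) • pderiv (Sum.inl (Sum.inr β))
          (pderiv (Sum.inr (Sum.inl β)) (X (Sum.inl (Sum.inr α)) * rename Sum.inr p)) +
        ((κ : ℂ) • il) • pderiv (Sum.inl (Sum.inl β))
          (pderiv (Sum.inr (Sum.inr β)) (X (Sum.inl (Sum.inr α)) * rename Sum.inr p)) =
      if β = α then ((-(1 - (κ : ℂ))) • il) • rename Sum.inr (pderiv (Sum.inl α) p) else 0 := by
    intro β
    classical
    rcases eq_or_ne β α with rfl | hβ
    · simp [pderiv_mul, pderiv_inl_rename_inr, pderiv_X, Pi.single_apply,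
        pderiv_rename Sum.inr_injective]
    · simp [pderiv_mul, pderiv_inl_rename_inr, pderiv_X, Pi.single_apply, hβ,
        pderiv_rename Sum.inr_injective]
  rw [Finset.sum_congr rfl fun β _ => h β, Finset.sum_ite_eq' Finset.univ α,
    if_pos (Finset.mem_univ α)]

set_option synthInstance.maxHeartbeats 1000000 in
lemma Nop_joinLR_right_inl {n : ℕ} {κ : ℝ} (p : A n) (α : Fin n) :
    Nop n κ (joinLR n p (X (Sum.inl α))) =
      ((-(1 - (κ : ℂ))) • il) • rename Sum.inl (pderiv (Sum.inr α) p) := by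
  unfold Nop joinLR
  rw [rename_X]
  have h : ∀ β : Fin n,
      ((-(1 - (κ : ℂ))) • il) • pderiv (Sum.inl (Sum.inr β))
          (pderiv (Sum.inr (Sum.inl β)) (rename Sum.inl p * X (Sum.inr (Sum.inl α)))) +
        ((κ : ℂ) • il) • pderiv (Sum.inl (Sum.inl β))
          (pderiv (Sum.inr (Sum.inr β)) (rename Sum.inl p * X (Sum.inr (Sum.inl α)))) =
      if β = α then ((-(1 - (κ : ℂ))) • il) • rename Sum.inl (pderiv (Sum.inr α) p) else 0 := by
    intro β
    classical
    rcases eq_or_ne β α with rfl | hβ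
    · simp [pderiv_mul, pderiv_inr_rename_inl, pderiv_X, Pi.single_apply,
        pderiv_rename Sum.inl_injective]
    · simp [pderiv_mul, pderiv_inr_rename_inl, pderiv_X, Pi.single_apply, hβ]
  rw [Finset.sum_congr rfl fun β _ => h β, Finset.sum_ite_eq' Finset.univ α,
    if_pos (Finset.mem_univ α)]

set_option synthInstance.maxHeartbeats 1000000 in
lemma Nop_joinLR_left_inl {n : ℕ} {κ : ℝ} (p : A n) (α : Fin n) :
    Nop n κ (joinLR n (X (Sum.inl α)) p) =
      ((κ : ℂ) • il) • rename Sum.inr (pderiv (Sum.inr α) p) := by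
  unfold Nop joinLR
  rw [rename_X]
  have h : ∀ β : Fin n,
      ((-(1 - (κ : ℂ))) • il) • pderiv (Sum.inl (Sum.inr β))
          (pderiv (Sum.inr (Sum.inl β)) (X (Sum.inl (Sum.inl α)) * rename Sum.inr p)) +
        ((κ : ℂ) • il) • pderiv (Sum.inl (Sum.inl β))
          (pderiv (Sum.inr (Sum.inr β)) (X (Sum.inl (Sum.inl α)) * rename Sum.inr p)) =
      if β = α then ((κ : ℂ) • il) • rename Sum.inr (pderiv (Sum.inr α) p) else 0 := by
    intro β
    classical
    rcases eq_or_ne β α with rfl | hβ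
    · simp [pderiv_mul, pderiv_inl_rename_inr, pderiv_X, Pi.single_apply,
        pderiv_rename Sum.inr_injective]
    · simp [pderiv_mul, pderiv_inl_rename_inr, pderiv_X, Pi.single_apply, hβ,
        pderiv_rename Sum.inr_injective]
  rw [Finset.sum_congr rfl fun β _ => h β, Finset.sum_ite_eq' Finset.univ α,
    if_pos (Finset.mem_univ α)]

lemma starK_right_X_inr {n : ℕ} {κ : ℝ} (p : A n) (α : Fin n) :
    starK n κ p (X (Sum.inr α)) =
      p * X (Sum.inr α) + ((κ : ℂ) • il) • pderiv (Sum.inl α) p := by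
  unfold starK
  rw [expN_eq _ (by rw [Nop_joinLR_right_inr, Nop_smul, Nop_rename_inl, smul_zero]),
    Nop_joinLR_right_inr, map_add, map_smul, merge_joinLR, merge_rename_inl]

lemma starK_left_X_inr {n : ℕ} {κ : ℝ} (p : A n) (α : Fin n) :
    starK n κ (X (Sum.inr α)) p =
      X (Sum.inr α) * p + ((-(1 - (κ : ℂ))) • il) • pderiv (Sum.inl α) p := by
  unfold starK
  rw [expN_eq _ (by rw [Nop_joinLR_left_inr, Nop_smul, Nop_rename_inr, smul_zero]),
    Nop_joinLR_left_inr, map_add, map_smul, merge_joinLR, merge_rename_inr]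

lemma starK_right_X_inl {n : ℕ} {κ : ℝ} (p : A n) (α : Fin n) :
    starK n κ p (X (Sum.inl α)) =
      p * X (Sum.inl α) + ((-(1 - (κ : ℂ))) • il) • pderiv (Sum.inr α) p := by
  unfold starK
  rw [expN_eq _ (by rw [Nop_joinLR_right_inl, Nop_smul, Nop_rename_inl, smul_zero]),
    Nop_joinLR_right_inl, map_add, map_smul, merge_joinLR, merge_rename_inl]

lemma starK_left_X_inl {n : ℕ} {κ : ℝ} (p : A n) (α : Fin n) :
    starK n κ (X (Sum.inl α)) p =
      X (Sum.inl α) * p + ((κ : ℂ) • il) • pderiv (Sum.inr α) p := by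
  unfold starK
  rw [expN_eq _ (by rw [Nop_joinLR_left_inl, Nop_smul, Nop_rename_inr, smul_zero]),
    Nop_joinLR_left_inl, map_add, map_smul, merge_joinLR, merge_rename_inr]

lemma starK_C_left {n : ℕ} {κ : ℝ} (r : Rg) (q : A n) :
    starK n κ (C r) q = C r * q := by
  unfold starK joinLR
  rw [rename_C]
  have h0 : Nop n κ (C r * rename Sum.inr q) = 0 := by
    rw [← smul_eq_C_mul, Nop_smul, Nop_rename_inr, smul_zero]
  rw [expN_eq _ (by rw [h0, Nop_zero]), h0, add_zero, map_mul, merge_rename_inr]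
  congr 1
  show rename (Sum.elim id id) (C r) = C r
  rw [rename_C]

lemma starK_C_right {n : ℕ} {κ : ℝ} (r : Rg) (q : A n) :
    starK n κ q (C r) = C r * q := by
  unfold starK joinLR
  rw [rename_C, mul_comm]
  have h0 : Nop n κ (C r * rename Sum.inl q) = 0 := by
    rw [← smul_eq_C_mul, Nop_smul, Nop_rename_inl, smul_zero]
  rw [expN_eq _ (by rw [h0, Nop_zero]), h0, add_zero, map_mul, merge_rename_inl]
  congr 1
  show rename (Sum.elim id id) (C r) = C r
  rw [rename_C]

lemma wsign_mul {n : ℕ} {S T : Finset (Fin n)} (hd : Disjoint S T) :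
    wsign n S T = (-1 : ℂ) ^ (S.card * T.card) * wsign n T S := by
  classical
  have h1 : ((T ×ˢ S).filter fun p => p.2 < p.1).card
      = ((S ×ˢ T).filter fun p => p.1 < p.2).card := by
    refine Finset.card_bij' (fun p _ => p.swap) (fun p _ => p.swap) ?_ ?_ ?_ ?_
    · intro p hp
      simp only [Finset.mem_filter, Finset.mem_product] at hp ⊢
      exact ⟨⟨hp.1.2, hp.1.1⟩, hp.2⟩
    · intro p hp
      simp only [Finset.mem_filter, Finset.mem_product] at hp ⊢
      exact ⟨⟨hp.1.2, hp.1.1⟩, hp.2⟩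
    · intro p _; simp
    · intro p _; simp
  have key : ((S ×ˢ T).filter fun p => p.2 < p.1).card
      + ((T ×ˢ S).filter fun p => p.2 < p.1).card = S.card * T.card := by
    rw [h1]
    have h2 : ((S ×ˢ T).filter fun p => p.1 < p.2)
        = ((S ×ˢ T).filter fun p => ¬ p.2 < p.1) := by
      refine Finset.filter_congr fun p hp => ?_
      simp only [Finset.mem_product] at hp
      have hne : p.1 ≠ p.2 := fun hEq => Finset.disjoint_left.mp hd hp.1 (hEq ▸ hp.2)
      constructor
      · intro h; exact not_lt.mpr h.le
      · intro h; exact lt_of_le_of_ne (not_lt.mp h) hne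
    rw [h2, Finset.card_filter_add_card_filter_not, Finset.card_product]
  unfold wsign
  rw [← key, pow_add, mul_assoc, ← pow_add,
    Even.neg_one_pow ⟨((T ×ˢ S).filter fun p => p.2 < p.1).card, rfl⟩, mul_one]

lemma adK_single_empty {n : ℕ} {κ : ℝ} (a : FA n) (q : A n) :
    adK n κ a (Finsupp.single ∅ q) =
      a.sum fun S p => Finsupp.single S (starK n κ p q - starK n κ q p) := by
  unfold adK
  refine Finsupp.sum_congr fun S hS => ?_
  rw [Finsupp.sum_single_index]
  · simp [wsign, Finsupp.single_sub]
  · simp only [starK_zero_left, starK_zero_right, Finsupp.single_zero, smul_zero, if_pos, ite_self]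
    exact sub_self (0 : FA n)

lemma component_eq_zero {n : ℕ} (a : FA n) (g : A n → A n) (hg : g 0 = 0)
    (h : (a.sum fun S p => Finsupp.single S (g p)) = 0) (S₀ : Finset (Fin n)) :
    g (a S₀) = 0 := by
  classical
  have h2 := DFunLike.congr_fun h S₀
  rw [Finsupp.sum_apply, Finsupp.sum] at h2
  simp only [Finsupp.single_apply] at h2
  rw [Finset.sum_ite_eq' a.support S₀] at h2
  by_cases hS : S₀ ∈ a.support
  · rwa [if_pos hS] at h2
  · rw [Finsupp.notMem_support_iff.mp hS, hg]

end Aux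

/- Statement 8: the super-centre of `(Sym(V*) ⊗ Sym(V) ⊗ Λ(V*)[[λ]], ∘_κ)`
consists exactly of the elements of symmetric `V*`-degree 0 and symmetric
`V`-degree 0, i.e. `ad_κ(a) = 0` iff `a ∈ Λ(V*)[[λ]]` (all its coefficient
polynomials are constants). -/
theorem stmt8 (n : ℕ) (κ : ℝ) (a : FA n) :
    (∀ b : FA n, adK n κ a b = 0) ↔
      ∀ S : Finset (Fin n), ∃ r : Rg, a S = MvPolynomial.C r := by
  constructor
  · intro h S₀
    apply eq_C_of_pderiv_eq_zero
    intro v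
    cases v with
    | inl α =>
      have hb := h (Finsupp.single ∅ (MvPolynomial.X (Sum.inr α)))
      rw [adK_single_empty] at hb
      have hc := component_eq_zero a _
        (by rw [starK_zero_left, starK_zero_right, sub_zero]) hb S₀
      rw [starK_right_X_inr, starK_left_X_inr,
        mul_comm (MvPolynomial.X (Sum.inr α)) (a S₀), sub_eq_zero] at hc
      have heq := add_left_cancel hc
      have hz : (((κ : ℂ) • il - (-(1 - (κ : ℂ))) • il) : Rg) •
          MvPolynomial.pderiv (Sum.inl α) (a S₀) = 0 := by
        rw [sub_smul, heq, sub_self]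
      have hs : ((κ : ℂ) • il - (-(1 - (κ : ℂ))) • il : Rg) = il := by
        rw [← sub_smul]
        have h1 : (κ : ℂ) - (-(1 - (κ : ℂ))) = 1 := by ring
        rw [h1, one_smul]
      rw [hs] at hz
      exact eq_zero_of_il_smul hz
    | inr α =>
      have hb := h (Finsupp.single ∅ (MvPolynomial.X (Sum.inl α)))
      rw [adK_single_empty] at hb
      have hc := component_eq_zero a _
        (by rw [starK_zero_left, starK_zero_right, sub_zero]) hb S₀
      rw [starK_right_X_inl, starK_left_X_inl,
        mul_comm (MvPolynomial.X (Sum.inl α)) (a S₀), sub_eq_zero] at hc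
      have heq := add_left_cancel hc
      have hz : ((((-(1 - (κ : ℂ))) • il : Rg) - (κ : ℂ) • il) : Rg) •
          MvPolynomial.pderiv (Sum.inr α) (a S₀) = 0 := by
        rw [sub_smul, heq, sub_self]
      have hs : (((-(1 - (κ : ℂ))) • il : Rg) - (κ : ℂ) • il : Rg) = -il := by
        rw [← sub_smul]
        have h1 : (-(1 - (κ : ℂ))) - (κ : ℂ) = -1 := by ring
        rw [h1, neg_one_smul]
      rw [hs, neg_smul, neg_eq_zero] at hz
      exact eq_zero_of_il_smul hz
  · intro h b
    unfold adK
    rw [Finsupp.sum]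
    refine Finset.sum_eq_zero fun S hS => ?_
    obtain ⟨r, hr⟩ := h S
    rw [Finsupp.sum]
    refine Finset.sum_eq_zero fun T hT => ?_
    by_cases hd : Disjoint S T
    · rw [if_pos hd, if_pos hd.symm, hr, starK_C_left, starK_C_right,
        Finset.union_comm T S, wsign_mul hd, mul_smul]
      exact sub_self ((-1 : ℂ) ^ (S.card * T.card) • wsign n T S •
        Finsupp.single (S ∪ T) (MvPolynomial.C r * b T))
    · have hd2 : ¬ Disjoint T S := fun hd' => hd hd'.symm
      rw [if_neg hd, if_neg hd2, smul_zero]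
      exact sub_self (0 : FA n)


end

end Stmt6
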